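/- Let (P,σ) be a continuous orthonormal system on ℝ⁺, i.e., for σ-a.e. k the function r ↦ P(r,k) is locally square integrable on ℝ⁺, and for every f ∈ L²(ℝ⁺) and every a > 0 one has ∫_ℝ |∫₀^a f(r)P(r,k)dr|² dσ(k) = ∫₀^a |f(r)|² dr. If L := ∫₀^∞ |f(r)|² log²(2+r) dr < ∞, then the sequence of partial integrals n ↦ ∫₀^n f(r)P(r,k)dr converges for σ-a.e. k ∈ ℝ, and the maximal function M(k) := sup_{n∈ℕ} |∫₀^n f(r)P(r,k)dr| satisfies ‖M‖_{L²_σ(ℝ)} ≤ C·L^{1/2} for some absolute constant C. -/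

import Mathlib

open MeasureTheory Set Filter
open scoped ENNReal NNReal

namespace MR

lemma sq_add_le (x y Z : ℝ) (m : ℕ) (h : y^2 ≤ (m+1) * Z) :
    (x + y)^2 ≤ (m+2) * (x^2 + Z) := by
  nlinarith [sq_nonneg ((m+1)*x - y), sq_nonneg x, sq_nonneg y]

lemma enorm_sq_eq (z : ℂ) : (‖z‖₊ : ℝ≥0∞)^2 = ENNReal.ofReal (‖z‖^2) := by
  rw [ENNReal.ofReal_pow (norm_nonneg _), ← coe_nnnorm, ENNReal.ofReal_coe_nnreal]

noncomputable def qsum (e : ℕ → ℕ → ℝ≥0∞) (m c : ℕ) : ℝ≥0∞ :=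
  ∑ l ∈ Finset.range (m+1), ∑ i ∈ Finset.range (2^(m-l)), e (c + i*2^l) (c + (i+1)*2^l)

lemma qsum_mono (e : ℕ → ℕ → ℝ≥0∞) (m c : ℕ) : qsum e m c ≤ qsum e (m+1) c := by
  unfold qsum
  calc ∑ l ∈ Finset.range (m+1), ∑ i ∈ Finset.range (2^(m-l)), e (c + i*2^l) (c + (i+1)*2^l)
      ≤ ∑ l ∈ Finset.range (m+1), ∑ i ∈ Finset.range (2^(m+1-l)), e (c + i*2^l) (c + (i+1)*2^l) := by
        refine Finset.sum_le_sum fun l hl => Finset.sum_le_sum_of_subset ?_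
        exact Finset.range_subset_range.mpr (Nat.pow_le_pow_right (by norm_num) (by omega))
    _ ≤ ∑ l ∈ Finset.range (m+1+1), ∑ i ∈ Finset.range (2^(m+1-l)), e (c + i*2^l) (c + (i+1)*2^l) :=
        Finset.sum_le_sum_of_subset (Finset.range_subset_range.mpr (by omega))

lemma qsum_structural (e : ℕ → ℕ → ℝ≥0∞) (m c : ℕ) :
    e c (c + 2^m) + qsum e m (c + 2^m) ≤ qsum e (m+1) c := by
  have hsplit : ∀ l ∈ Finset.range (m+1),
      ∑ i ∈ Finset.range (2^(m+1-l)), e (c + i*2^l) (c + (i+1)*2^l)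
      = (∑ i ∈ Finset.range (2^(m-l)), e (c + i*2^l) (c + (i+1)*2^l))
        + ∑ i ∈ Finset.range (2^(m-l)), e ((c+2^m) + i*2^l) ((c+2^m) + (i+1)*2^l) := by
    intro l hl
    have hl' : l ≤ m := by simpa using Nat.lt_succ_iff.mp (Finset.mem_range.mp hl)
    have h2m : 2^(m-l) * 2^l = 2^m := by
      rw [← pow_add, Nat.sub_add_cancel hl']
    have hrange : 2^(m+1-l) = 2^(m-l) + 2^(m-l) := by
      have h : m+1-l = (m-l)+1 := by omega
      rw [h, pow_succ]; omega
    rw [hrange, Finset.sum_range_add]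
    congr 1
    refine Finset.sum_congr rfl fun i _ => ?_
    have h1 : ∀ i' : ℕ, (2^(m-l)+i')*2^l = 2^m + i'*2^l := fun i' => by rw [add_mul, h2m]
    congr 1
    · rw [h1, ← add_assoc]
    · rw [show 2^(m-l)+i+1 = 2^(m-l)+(i+1) by omega, h1, ← add_assoc]
  calc e c (c+2^m) + qsum e m (c+2^m)
      ≤ (∑ l ∈ Finset.range (m+1), ∑ i ∈ Finset.range (2^(m-l)), e (c + i*2^l) (c + (i+1)*2^l))
        + qsum e m (c+2^m) := by
        gcongr
        have h : e c (c + 2^m) = ∑ i ∈ Finset.range (2^(m-m)), e (c + i*2^m) (c + (i+1)*2^m) := by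
          simp
        rw [h]
        exact Finset.single_le_sum
          (f := fun l => ∑ i ∈ Finset.range (2^(m-l)), e (c + i*2^l) (c + (i+1)*2^l))
          (fun _ _ => zero_le) (Finset.self_mem_range_succ m)
    _ = ∑ l ∈ Finset.range (m+1),
          ((∑ i ∈ Finset.range (2^(m-l)), e (c + i*2^l) (c + (i+1)*2^l))
          + ∑ i ∈ Finset.range (2^(m-l)), e ((c+2^m) + i*2^l) ((c+2^m) + (i+1)*2^l)) := by
        rw [Finset.sum_add_distrib]; rfl
    _ = ∑ l ∈ Finset.range (m+1), ∑ i ∈ Finset.range (2^(m+1-l)), e (c + i*2^l) (c + (i+1)*2^l) :=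
        (Finset.sum_congr rfl hsplit).symm
    _ ≤ qsum e (m+1) c := Finset.sum_le_sum_of_subset (Finset.range_subset_range.mpr (by omega))

lemma claimB (D : ℕ → ℕ → ℂ) (Good : ℕ → Prop)
    (hzero : ∀ a, D a a = 0)
    (hadd : ∀ a b c, a ≤ b → b ≤ c → Good c → D a c = D a b + D b c) :
    ∀ m c j, j ≤ 2^m → Good (c+j) →
      (‖D c (c+j)‖₊ : ℝ≥0∞)^2
        ≤ (m+1) * qsum (fun a b => (‖D a b‖₊ : ℝ≥0∞)^2) m c := by
  set e : ℕ → ℕ → ℝ≥0∞ := fun a b => (‖D a b‖₊ : ℝ≥0∞)^2 with he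
  intro m
  induction m with
  | zero =>
    intro c j hj hG
    interval_cases j
    · simp [he, hzero]
    · have h : qsum e 0 c = e c (c+1) := by simp [qsum]
      rw [h]; simp [he]
  | succ m ih =>
    intro c j hj hG
    by_cases hj2 : j ≤ 2^m
    · calc e c (c+j) ≤ (m+1) * qsum e m c := ih c j hj2 hG
        _ ≤ ((m:ℝ≥0∞)+1+1) * qsum e (m+1) c := by
            gcongr ?_ * ?_
            · norm_cast; omega
            · exact qsum_mono e m c
        _ = (((m+1:ℕ):ℝ≥0∞)+1) * qsum e (m+1) c := by push_cast; ring
    · have hj1 : 2^m < j := not_le.mp hj2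
      have h2m : 2^m ≤ 2^(m+1) := Nat.pow_le_pow_right (by norm_num) (by omega)
      have hGm : Good (c + 2^m + (j - 2^m)) := by
        rw [show c + 2^m + (j - 2^m) = c + j by omega]; exact hG
      have ihy := ih (c + 2^m) (j - 2^m) (by omega) hGm
      rw [show c + 2^m + (j - 2^m) = c + j by omega] at ihy
      have h1 : D c (c+j) = D c (c+2^m) + D (c+2^m) (c+j) :=
        hadd _ _ _ (by omega) (by omega) hG
      have hstruct := qsum_structural e m c
      by_cases hZ : qsum e m (c+2^m) = ∞
      · have htop : qsum e (m+1) c = ∞ := by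
          have h2 := hstruct
          rw [hZ] at h2
          simpa using h2
        rw [htop, ENNReal.mul_top (by simp)]
        exact le_top
      · set x := ‖D c (c+2^m)‖ with hx
        set y := ‖D (c+2^m) (c+j)‖ with hy
        set Z := (qsum e m (c+2^m)).toReal with hZr
        have hZ0 : 0 ≤ Z := ENNReal.toReal_nonneg
        have hyZ : y^2 ≤ (m+1) * Z := by
          have h2 : ENNReal.ofReal (y^2) ≤ ENNReal.ofReal ((m+1) * Z) := by
            rw [← enorm_sq_eq]
            refine ihy.trans_eq ?_
            rw [ENNReal.ofReal_mul (by positivity), ENNReal.ofReal_toReal hZ]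
            congr 1
            rw [← ENNReal.ofReal_natCast m]
            rw [← ENNReal.ofReal_one, ← ENNReal.ofReal_add (by positivity) (by norm_num)]
          rwa [ENNReal.ofReal_le_ofReal_iff (by positivity)] at h2
        have hreal : (x + y)^2 ≤ (m+2) * (x^2 + Z) := sq_add_le x y Z m hyZ
        calc e c (c+j) = ENNReal.ofReal (‖D c (c+j)‖^2) := enorm_sq_eq _
          _ ≤ ENNReal.ofReal ((x+y)^2) := by
              apply ENNReal.ofReal_le_ofReal
              have h3 := norm_add_le (D c (c+2^m)) (D (c+2^m) (c+j))
              rw [← h1] at h3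
              exact pow_le_pow_left₀ (norm_nonneg _) h3 2
          _ ≤ ENNReal.ofReal ((m+2) * (x^2 + Z)) := ENNReal.ofReal_le_ofReal hreal
          _ = ((m:ℝ≥0∞)+1+1) * (e c (c+2^m) + qsum e m (c+2^m)) := by
              rw [ENNReal.ofReal_mul (by positivity), ENNReal.ofReal_add (by positivity) hZ0,
                ENNReal.ofReal_toReal hZ, ← enorm_sq_eq]
              congr 1
              rw [show ((m:ℝ)+2) = ((m:ℝ)+1+1) by ring, ← ENNReal.ofReal_natCast m]
              rw [← ENNReal.ofReal_one, ← ENNReal.ofReal_add (by positivity) (by norm_num),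
                ← ENNReal.ofReal_add (by positivity) (by norm_num)]
          _ ≤ ((m:ℝ≥0∞)+1+1) * qsum e (m+1) c := by gcongr
          _ = (((m+1:ℕ):ℝ≥0∞)+1) * qsum e (m+1) c := by push_cast; ring

lemma tele (g : ℝ → ℝ≥0∞) (v : ℕ → ℝ) (hv : Monotone v) :
    ∀ N, ∑ i ∈ Finset.range N, ∫⁻ r in Ioc (v i) (v (i+1)), g r
      = ∫⁻ r in Ioc (v 0) (v N), g r := by
  intro N
  induction N with
  | zero => simp
  | succ N ihN =>
    rw [Finset.sum_range_succ, ihN, ← lintegral_union measurableSet_Ioc (Set.Ioc_disjoint_Ioc_of_le le_rfl),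
      Set.Ioc_union_Ioc_eq_Ioc (hv (Nat.zero_le N)) (hv (Nat.le_succ N))]

lemma sum_inv_sq_le_aux : ∀ N : ℕ, ∑ i ∈ Finset.range N, (1:ℝ)/(i+1)^2 ≤ 2 - 2/((N:ℝ)+1) := by
  intro N
  induction N with
  | zero => norm_num
  | succ N ihN =>
    rw [Finset.sum_range_succ]
    have h1 : (1:ℝ)/((N:ℝ)+1)^2 ≤ 2/((N:ℝ)+1) - 2/((N:ℝ)+2) := by
      rw [div_sub_div _ _ (by positivity) (by positivity),
        div_le_div_iff₀ (by positivity) (by positivity)]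
      nlinarith [sq_nonneg (N:ℝ)]
    have h2 := add_le_add ihN h1
    push_cast
    rw [show ((N:ℝ)+1+1) = (N:ℝ)+2 by ring]
    linarith

lemma sum_inv_sq_le (N : ℕ) : ∑ i ∈ Finset.range N, (1:ℝ)/(i+1)^2 ≤ 2 := by
  have h2 : (0:ℝ) < 2/((N:ℝ)+1) := by positivity
  linarith [sum_inv_sq_le_aux N]

lemma tsum_inv_sq_le : (∑' i : ℕ, ENNReal.ofReal ((1:ℝ)/(i+1)^2)) ≤ 2 := by
  rw [ENNReal.tsum_eq_iSup_nat]
  refine iSup_le fun N => ?_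
  have h : ∑ i ∈ Finset.range N, ENNReal.ofReal ((1:ℝ)/(i+1)^2)
      = ENNReal.ofReal (∑ i ∈ Finset.range N, (1:ℝ)/(i+1)^2) := by
    rw [ENNReal.ofReal_sum_of_nonneg (fun i _ => by positivity)]
  rw [h]
  calc ENNReal.ofReal (∑ i ∈ Finset.range N, (1:ℝ)/(i+1)^2) ≤ ENNReal.ofReal 2 :=
        ENNReal.ofReal_le_ofReal (sum_inv_sq_le N)
    _ = 2 := by norm_num

lemma tsum_CS (x y : ℕ → ℝ≥0∞) :
    ∑' i, x i * y i ≤ (∑' i, (x i)^2)^(1/2:ℝ) * (∑' i, (y i)^2)^(1/2:ℝ) := by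
  have hconj : Real.HolderConjugate 2 2 := by
    constructor <;> norm_num
  have h := ENNReal.lintegral_mul_le_Lp_mul_Lq (Measure.count (α := ℕ)) hconj
    (f := x) (g := y) (Measurable.of_discrete).aemeasurable (Measurable.of_discrete).aemeasurable
  simpa [MeasureTheory.lintegral_count, ENNReal.rpow_two] using h

lemma rpow_half_sq (z : ℝ≥0∞) : (z^(1/2:ℝ))^2 = z := by
  rw [← ENNReal.rpow_natCast (z^(1/2:ℝ)) 2, ← ENNReal.rpow_mul]
  norm_num

lemma sq_rpow_half (z : ℝ≥0∞) : (z^2)^(1/2:ℝ) = z := by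
  rw [← ENNReal.rpow_natCast z 2, ← ENNReal.rpow_mul]
  norm_num

lemma le_rpow_half (u z : ℝ≥0∞) (h : u^2 ≤ z) : u ≤ z^(1/2:ℝ) := by
  calc u = (u^2)^(1/2:ℝ) := (sq_rpow_half u).symm
    _ ≤ z^(1/2:ℝ) := ENNReal.rpow_le_rpow h (by norm_num)

lemma iSup_sq (S : ℕ → ℝ≥0∞) (hS : Monotone S) : (⨆ N, S N)^2 = ⨆ N, (S N)^2 := by
  apply le_antisymm
  · rw [pow_two, ENNReal.iSup_mul]
    refine iSup_le fun N => ?_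
    rw [ENNReal.mul_iSup]
    refine iSup_le fun M => ?_
    calc S N * S M ≤ S (max N M) * S (max N M) :=
          mul_le_mul' (hS (le_max_left N M)) (hS (le_max_right N M))
      _ = (S (max N M))^2 := (pow_two _).symm
      _ ≤ ⨆ K, (S K)^2 := le_iSup (fun K => (S K)^2) _
  · exact iSup_le fun N => pow_le_pow_left' (le_iSup S N) 2

lemma aemeasurable_tsum {α : Type*} [MeasurableSpace α] {μ : Measure α} (g : ℕ → α → ℝ≥0∞)
    (h : ∀ i, AEMeasurable (g i) μ) : AEMeasurable (fun x => ∑' i, g i x) μ := by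
  have heq : (fun x => ∑' i, g i x) = fun x => ⨆ N, ∑ i ∈ Finset.range N, g i x :=
    funext fun x => ENNReal.tsum_eq_iSup_nat
  rw [heq]
  exact AEMeasurable.iSup fun N => Finset.aemeasurable_fun_sum _ fun i _ => h i

lemma minkowski_sum {α : Type*} [MeasurableSpace α] {μ : Measure α} (u : ℕ → α → ℝ≥0∞)
    (hu : ∀ i, AEMeasurable (u i) μ) (N : ℕ) :
    (∫⁻ k, (∑ i ∈ Finset.range N, u i k)^2 ∂μ)^(1/2:ℝ)
      ≤ ∑ i ∈ Finset.range N, (∫⁻ k, (u i k)^2 ∂μ)^(1/2:ℝ) := by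
  induction N with
  | zero => simp
  | succ N ih =>
    have hsum : AEMeasurable (fun k => ∑ i ∈ Finset.range N, u i k) μ :=
      Finset.aemeasurable_fun_sum _ fun i _ => hu i
    have h := ENNReal.lintegral_Lp_add_le (p := 2) hsum (hu N) (by norm_num)
    simp only [ENNReal.rpow_two] at h
    calc (∫⁻ k, (∑ i ∈ Finset.range (N+1), u i k)^2 ∂μ)^(1/2:ℝ)
        = (∫⁻ k, ((∑ i ∈ Finset.range N, u i k) + u N k)^2 ∂μ)^(1/2:ℝ) := by
          congr 1
          exact lintegral_congr fun k => by rw [Finset.sum_range_succ]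
      _ ≤ (∫⁻ k, (∑ i ∈ Finset.range N, u i k)^2 ∂μ)^(1/2:ℝ)
            + (∫⁻ k, (u N k)^2 ∂μ)^(1/2:ℝ) := h
      _ ≤ ∑ i ∈ Finset.range (N+1), (∫⁻ k, (u i k)^2 ∂μ)^(1/2:ℝ) := by
          rw [Finset.sum_range_succ]
          exact add_le_add_left ih _

lemma parseval_key (σ : Measure ℝ) (P : ℝ → ℝ → ℂ) (f : ℝ → ℂ)
    (hPar : ∀ g : ℝ → ℂ, MemLp g 2 (volume.restrict (Set.Ioi (0:ℝ))) → ∀ a : ℝ, 0 < a →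
        ∫ k, ‖∫ r in Set.Ioc (0:ℝ) a, g r * P r k‖ ^ 2 ∂σ
          = ∫ r in Set.Ioc (0:ℝ) a, ‖g r‖ ^ 2)
    (hf : MemLp f 2 (volume.restrict (Set.Ioi (0:ℝ))))
    (a b : ℝ) (ha : 0 ≤ a) (hab : a < b) :
        Integrable (fun k => ‖∫ r in Set.Ioc a b, f r * P r k‖^2) σ ∧
        ∫⁻ k, (‖∫ r in Set.Ioc a b, f r * P r k‖₊ : ℝ≥0∞)^2 ∂σ
          = ∫⁻ r in Set.Ioc a b, (‖f r‖₊ : ℝ≥0∞)^2 := by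
  have hb : 0 < b := lt_of_le_of_lt ha hab
  have hsub : Set.Ioc a b ⊆ Set.Ioi (0:ℝ) :=
    fun r hr => lt_of_le_of_lt ha hr.1
  have hsub' : Set.Ioc a b ⊆ Set.Ioc (0:ℝ) b := Set.Ioc_subset_Ioc ha le_rfl
  have hf2 : Integrable (fun r => ‖f r‖^2) (volume.restrict (Set.Ioi (0:ℝ))) := by
    have h := hf.integrable_norm_rpow two_ne_zero ENNReal.ofNat_ne_top
    have h2 : ((2:ℝ≥0∞).toReal) = (2:ℝ) := by simp
    simpa [h2, Real.rpow_natCast _ 2] using h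
  have hf2on : IntegrableOn (fun r => ‖f r‖^2) (Set.Ioc a b) volume := by
    have h := hf2.restrict (s := Set.Ioc a b)
    rwa [Measure.restrict_restrict measurableSet_Ioc,
      Set.inter_eq_self_of_subset_left hsub] at h
  set g : ℝ → ℂ := (Set.Ioc a b).indicator f with hg
  have hgmem : MemLp g 2 (volume.restrict (Set.Ioi (0:ℝ))) := hf.indicator measurableSet_Ioc
  have hPareq := hPar g hgmem b hb
  have hind : ∀ k r, g r * P r k = (Set.Ioc a b).indicator (fun r => f r * P r k) r := by
    intro k r
    by_cases h : r ∈ Set.Ioc a b <;>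
      simp [hg, Set.indicator_of_mem, Set.indicator_of_notMem, h]
  have hlhs : ∀ k, (∫ r in Set.Ioc (0:ℝ) b, g r * P r k) = ∫ r in Set.Ioc a b, f r * P r k := by
    intro k
    rw [show (fun r => g r * P r k) = (Set.Ioc a b).indicator (fun r => f r * P r k) from
      funext (hind k)]
    rw [setIntegral_indicator measurableSet_Ioc, Set.inter_eq_self_of_subset_right hsub']
  have hrhs : (∫ r in Set.Ioc (0:ℝ) b, ‖g r‖^2) = ∫ r in Set.Ioc a b, ‖f r‖^2 := by
    have h : (fun r => ‖g r‖^2) = (Set.Ioc a b).indicator (fun r => ‖f r‖^2) := by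
      funext r
      by_cases h : r ∈ Set.Ioc a b <;>
        simp [hg, Set.indicator_of_mem, Set.indicator_of_notMem, h]
    rw [h, setIntegral_indicator measurableSet_Ioc, Set.inter_eq_self_of_subset_right hsub']
  simp only [hlhs, hrhs] at hPareq
  have hρ : ENNReal.ofReal (∫ r in Set.Ioc a b, ‖f r‖^2)
      = ∫⁻ r in Set.Ioc a b, (‖f r‖₊ : ℝ≥0∞)^2 := by
    rw [ofReal_integral_eq_lintegral_ofReal hf2on (ae_of_all _ fun r => by positivity)]
    exact lintegral_congr fun r => (MR.enorm_sq_eq (f r)).symm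
  by_cases hz : (∫ r in Set.Ioc a b, ‖f r‖^2) = 0
  · have hfz : (fun r => ‖f r‖^2) =ᵐ[volume.restrict (Set.Ioc a b)] 0 :=
      (integral_eq_zero_iff_of_nonneg_ae (ae_of_all _ fun r => by positivity) hf2on).mp hz
    have hDz : ∀ k, (∫ r in Set.Ioc a b, f r * P r k) = 0 := by
      intro k
      apply integral_eq_zero_of_ae
      filter_upwards [hfz] with r hr
      have h0 : f r = 0 := by
        have h1 : ‖f r‖^2 = 0 := hr
        have h2 : ‖f r‖ = 0 := by nlinarith [norm_nonneg (f r)]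
        simpa using h2
      simp [h0]
    refine ⟨?_, ?_⟩
    · have h : (fun k => ‖∫ r in Set.Ioc a b, f r * P r k‖^2) = fun _ => 0 :=
        funext fun k => by simp [hDz k]
      rw [h]
      exact integrable_zero _ _ _
    · have h1 : ∀ k, (‖∫ r in Set.Ioc a b, f r * P r k‖₊ : ℝ≥0∞)^2 = 0 := fun k => by
        simp [hDz k]
      simp only [h1, lintegral_zero]
      rw [← hρ, hz]
      simp
  · have hInt : Integrable (fun k => ‖∫ r in Set.Ioc a b, f r * P r k‖^2) σ := by
      by_contra h
      exact hz (hPareq ▸ integral_undef h)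
    refine ⟨hInt, ?_⟩
    rw [← hρ, ← hPareq, ofReal_integral_eq_lintegral_ofReal hInt
      (ae_of_all _ fun k => by positivity)]
    exact lintegral_congr fun k => MR.enorm_sq_eq _



end MR
set_option maxHeartbeats 2000000 in
/-- Menchov–Rademacher theorem for continuous orthonormal systems. -/
theorem menchov_rademacher_continuous :
    ∃ C : ℝ, 0 < C ∧
    ∀ (σ : Measure ℝ) (P : ℝ → ℝ → ℂ) (f : ℝ → ℂ),
      (∀ᵐ k ∂σ, ∀ a : ℝ, 0 < a → IntegrableOn (fun r => ‖P r k‖ ^ 2) (Set.Ioc 0 a)) →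
      (∀ g : ℝ → ℂ, MemLp g 2 (volume.restrict (Set.Ioi (0:ℝ))) → ∀ a : ℝ, 0 < a →
        ∫ k, ‖∫ r in Set.Ioc (0:ℝ) a, g r * P r k‖ ^ 2 ∂σ
          = ∫ r in Set.Ioc (0:ℝ) a, ‖g r‖ ^ 2) →
      MemLp f 2 (volume.restrict (Set.Ioi (0:ℝ))) →
      Integrable (fun r => ‖f r‖ ^ 2 * (Real.log (2 + r)) ^ 2)
        (volume.restrict (Set.Ioi (0:ℝ))) →
      ((∀ᵐ k ∂σ, ∃ l : ℂ,
          Tendsto (fun n : ℕ => ∫ r in Set.Ioc (0:ℝ) (n:ℝ), f r * P r k) atTop (nhds l)) ∧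
        ∫ k, (⨆ n : ℕ, ‖∫ r in Set.Ioc (0:ℝ) (n:ℝ), f r * P r k‖) ^ 2 ∂σ
          ≤ C ^ 2 * ∫ r in Set.Ioi (0:ℝ), ‖f r‖ ^ 2 * (Real.log (2 + r)) ^ 2) := by
  have hlog2 : 0 < Real.log 2 := Real.log_pos (by norm_num)
  refine ⟨9 / Real.log 2, by positivity, ?_⟩
  intro σ P f hP hPar hf hL
  clear hP
  set D : ℝ → ℝ → ℝ → ℂ := fun a b k => ∫ r in Set.Ioc a b, f r * P r k with hD
  set wt : ℝ → ℝ≥0∞ := fun r => ENNReal.ofReal (‖f r‖^2 * (Real.log (2+r))^2) with hwt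
  set c₁ : ℝ≥0∞ := ENNReal.ofReal (4 / (Real.log 2)^2) with hc₁
  set W : ℝ≥0∞ := ∫⁻ r in Set.Ioi (0:ℝ), wt r with hW
  have hWL : ENNReal.ofReal (∫ r in Set.Ioi (0:ℝ), ‖f r‖^2 * (Real.log (2+r))^2) = W :=
    ofReal_integral_eq_lintegral_ofReal hL (ae_of_all _ fun r => by positivity)
  have hWfin : W ≠ ∞ := by rw [← hWL]; exact ENNReal.ofReal_ne_top
  have key : ∀ a b : ℝ, 0 ≤ a → a < b →
      Integrable (fun k => ‖D a b k‖^2) σ ∧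
      ∫⁻ k, (‖D a b k‖₊ : ℝ≥0∞)^2 ∂σ = ∫⁻ r in Set.Ioc a b, (‖f r‖₊ : ℝ≥0∞)^2 :=
    fun a b ha hab => MR.parseval_key σ P f hPar hf a b ha hab
  have meas : ∀ a b : ℝ, 0 ≤ a → a < b → AEMeasurable (fun k => (‖D a b k‖₊ : ℝ≥0∞)) σ := by
    intro a b ha hab
    have h1 : AEMeasurable (fun k => ‖D a b k‖^2) σ :=
      ((key a b ha hab).1).aestronglyMeasurable.aemeasurable
    have h2 : AEMeasurable (fun k => Real.sqrt (‖D a b k‖^2)) σ :=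
      Real.continuous_sqrt.measurable.comp_aemeasurable h1
    have h3 : (fun k => Real.sqrt (‖D a b k‖^2)) = fun k => ‖D a b k‖ :=
      funext fun k => Real.sqrt_sq (norm_nonneg _)
    rw [h3] at h2
    exact (ENNReal.measurable_ofReal.comp_aemeasurable h2).congr
      (ae_of_all _ fun k => by
        show ENNReal.ofReal ‖D a b k‖ = _; rw [← coe_nnnorm, ENNReal.ofReal_coe_nnreal])
  have meas2 : ∀ a b : ℝ, 0 ≤ a → a < b →
      AEMeasurable (fun k => (‖D a b k‖₊ : ℝ≥0∞)^2) σ :=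
    fun a b ha hab => (meas a b ha hab).pow_const 2
  have Dzero : ∀ (a : ℝ) k, D a a k = 0 := by
    intro a k
    simp [hD]
  have Dadd : ∀ (a b c : ℝ) (k : ℝ), a ≤ b → b ≤ c →
      IntegrableOn (fun r => f r * P r k) (Set.Ioc a c) volume →
      D a c k = D a b k + D b c k := by
    intro a b c k hab hbc hint
    show (∫ r in Set.Ioc a c, f r * P r k) = _
    rw [← Set.Ioc_union_Ioc_eq_Ioc hab hbc,
      setIntegral_union (Set.Ioc_disjoint_Ioc_of_le le_rfl) measurableSet_Ioc
        (hint.mono_set (Set.Ioc_subset_Ioc_right hbc))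
        (hint.mono_set (Set.Ioc_subset_Ioc_left hab))]
  -- claim B instantiated
  set e : ℝ → ℕ → ℕ → ℝ≥0∞ := fun k a b => (‖D (a:ℝ) (b:ℝ) k‖₊ : ℝ≥0∞)^2 with he
  have hBloc : ∀ (k : ℝ) (m c j : ℕ), j ≤ 2^m →
      IntegrableOn (fun r => f r * P r k) (Set.Ioc (0:ℝ) (((c+j:ℕ)):ℝ)) volume →
      e k c (c+j) ≤ ((m+1:ℕ):ℝ≥0∞) * MR.qsum (e k) m c := by
    intro k m c j hj hG
    have h := MR.claimB (fun a b => D (a:ℝ) (b:ℝ) k)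
      (fun n => IntegrableOn (fun r => f r * P r k) (Set.Ioc (0:ℝ) ((n:ℕ):ℝ)) volume)
      (fun a => Dzero _ k)
      (fun a b c h1 h2 hGc => Dadd (a:ℝ) (b:ℝ) (c:ℝ) k (by exact_mod_cast h1)
        (by exact_mod_cast h2)
        (hGc.mono_set (Set.Ioc_subset_Ioc_left (by positivity))))
      m c j hj hG
    have h' : e k c (c+j) ≤ ((m:ℝ≥0∞)+1) * MR.qsum (e k) m c := h
    rw [show ((m+1:ℕ):ℝ≥0∞) = (m:ℝ≥0∞)+1 by push_cast; ring]
    exact h'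
  -- lintegral of qsum
  have hlt : ∀ (c i s : ℕ), 0 < s → c + i*s < c + (i+1)*s := by
    intro c i s hs; nlinarith
  have hQint : ∀ (m c : ℕ), ∫⁻ k, MR.qsum (e k) m c ∂σ
      = ((m+1:ℕ):ℝ≥0∞) * ∫⁻ r in Set.Ioc ((c:ℕ):ℝ) (((c + 2^m:ℕ)):ℝ), (‖f r‖₊ : ℝ≥0∞)^2 := by
    intro m c
    have hmeas : ∀ a b : ℕ, a < b → AEMeasurable (fun k => e k a b) σ := fun a b h =>
      meas2 _ _ (Nat.cast_nonneg a) (by exact_mod_cast h)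
    have hpc : ∀ a b : ℕ, a < b → ∫⁻ k, e k a b ∂σ
        = ∫⁻ r in Set.Ioc ((a:ℕ):ℝ) ((b:ℕ):ℝ), (‖f r‖₊ : ℝ≥0∞)^2 := fun a b h =>
      (key _ _ (Nat.cast_nonneg a) (by exact_mod_cast h)).2
    have hadd : ∀ (a s N : ℕ), 0 < s →
        ∑ i ∈ Finset.range N, (∫⁻ r in Set.Ioc (((a + i*s:ℕ)):ℝ) (((a + (i+1)*s:ℕ)):ℝ),
          (‖f r‖₊ : ℝ≥0∞)^2)
        = ∫⁻ r in Set.Ioc ((a:ℕ):ℝ) (((a + N*s:ℕ)):ℝ), (‖f r‖₊ : ℝ≥0∞)^2 := by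
      intro a s N hs
      have hv : Monotone (fun i : ℕ => (((a + i*s:ℕ)):ℝ)) := fun i j hij => by
        have h1 : a + i*s ≤ a + j*s := Nat.add_le_add_left (mul_le_mul_left hij s) a
        dsimp only
        exact_mod_cast h1
      have h := MR.tele (fun r => (‖f r‖₊ : ℝ≥0∞)^2) (fun i : ℕ => (((a + i*s:ℕ)):ℝ)) hv N
      simpa using h
    calc ∫⁻ k, MR.qsum (e k) m c ∂σ
        = ∑ l ∈ Finset.range (m+1), ∫⁻ k, ∑ i ∈ Finset.range (2^(m-l)),
            e k (c + i*2^l) (c + (i+1)*2^l) ∂σ := by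
          simp only [MR.qsum]
          exact lintegral_finset_sum' _ fun l _ => Finset.aemeasurable_fun_sum _ fun i _ =>
            hmeas _ _ (hlt c i (2^l) (pow_pos (by norm_num) l))
      _ = ∑ l ∈ Finset.range (m+1), ∑ i ∈ Finset.range (2^(m-l)),
            (∫⁻ r in Set.Ioc (((c + i*2^l:ℕ)):ℝ) (((c + (i+1)*2^l:ℕ)):ℝ),
              (‖f r‖₊ : ℝ≥0∞)^2) := by
          refine Finset.sum_congr rfl fun l _ => ?_
          rw [lintegral_finset_sum' _ fun i _ =>
            hmeas _ _ (hlt c i (2^l) (pow_pos (by norm_num) l))]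
          exact Finset.sum_congr rfl fun i _ =>
            hpc _ _ (hlt c i (2^l) (pow_pos (by norm_num) l))
      _ = ∑ l ∈ Finset.range (m+1),
            (∫⁻ r in Set.Ioc ((c:ℕ):ℝ) (((c + 2^m:ℕ)):ℝ), (‖f r‖₊ : ℝ≥0∞)^2) := by
          refine Finset.sum_congr rfl fun l hl => ?_
          have hl' : l ≤ m := by simpa [Nat.lt_succ_iff] using hl
          have h2 : 2^(m-l) * 2^l = 2^m := by rw [← pow_add, Nat.sub_add_cancel hl']
          rw [hadd c (2^l) (2^(m-l)) (pow_pos (by norm_num) l), h2]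
      _ = ((m+1:ℕ):ℝ≥0∞) * ∫⁻ r in Set.Ioc ((c:ℕ):ℝ) (((c + 2^m:ℕ)):ℝ),
            (‖f r‖₊ : ℝ≥0∞)^2 := by
          rw [Finset.sum_const, Finset.card_range, nsmul_eq_mul]
  -- weighted block bounds
  set Wm : ℕ → ℝ≥0∞ := fun m => ∫⁻ r in Set.Ioc (((2^m:ℕ)):ℝ) (((2^(m+1):ℕ)):ℝ), wt r with hWm
  set ρ : ℕ → ℝ≥0∞ :=
    fun m => ∫⁻ r in Set.Ioc (((2^m:ℕ)):ℝ) (((2^(m+1):ℕ)):ℝ), (‖f r‖₊ : ℝ≥0∞)^2 with hρ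
  have hcast : ∀ m : ℕ, (((2^m:ℕ)):ℝ) = (2:ℝ)^m := by intro m; push_cast; ring
  have hblock : ∀ m : ℕ, ((m+1:ℕ):ℝ≥0∞)^2 * ρ m ≤ c₁ * Wm m := by
    intro m
    have hpt : ∀ r ∈ Set.Ioc (((2^m:ℕ)):ℝ) (((2^(m+1):ℕ)):ℝ),
        ((m+1:ℕ):ℝ≥0∞)^2 * (‖f r‖₊ : ℝ≥0∞)^2 ≤ c₁ * wt r := by
      intro r hr
      have hr1 : (2:ℝ)^m < r := by rw [← hcast m]; exact hr.1
      have hrpos : (0:ℝ) < r := lt_of_le_of_lt (by positivity) hr1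
      have hlogr : ((m:ℝ)+1)/2 * Real.log 2 ≤ Real.log (2+r) := by
        rcases Nat.eq_zero_or_pos m with hm | hm
        · subst hm
          have h1 : Real.log 2 ≤ Real.log (2+r) :=
            Real.log_le_log (by norm_num) (by linarith)
          simp only [Nat.cast_zero]
          linarith
        · have hm1 : (1:ℝ) ≤ (m:ℝ) := by exact_mod_cast hm
          have h1 : Real.log ((2:ℝ)^m) = (m:ℝ) * Real.log 2 := Real.log_pow 2 m
          have h2 : Real.log ((2:ℝ)^m) ≤ Real.log (2+r) :=
            Real.log_le_log (by positivity) (by nlinarith)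
          nlinarith
      have hreal : ((m:ℝ)+1)^2 * ‖f r‖^2
          ≤ (4/(Real.log 2)^2) * (‖f r‖^2 * (Real.log (2+r))^2) := by
        have hsq : (((m:ℝ)+1)/2 * Real.log 2)^2 ≤ (Real.log (2+r))^2 := by
          have hnn : 0 ≤ ((m:ℝ)+1)/2 * Real.log 2 := by positivity
          nlinarith
        have h4 : (4/(Real.log 2)^2) * ((((m:ℝ)+1)/2 * Real.log 2)^2) = ((m:ℝ)+1)^2 := by
          field_simp
          ring
        have h5 : (4/(Real.log 2)^2) * ‖f r‖^2 * ((((m:ℝ)+1)/2 * Real.log 2)^2)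
            ≤ (4/(Real.log 2)^2) * ‖f r‖^2 * (Real.log (2+r))^2 :=
          mul_le_mul_of_nonneg_left hsq (by positivity)
        calc ((m:ℝ)+1)^2 * ‖f r‖^2
            = (4/(Real.log 2)^2) * ‖f r‖^2 * ((((m:ℝ)+1)/2 * Real.log 2)^2) := by
              rw [← h4]; ring
          _ ≤ (4/(Real.log 2)^2) * ‖f r‖^2 * (Real.log (2+r))^2 := h5
          _ = (4/(Real.log 2)^2) * (‖f r‖^2 * (Real.log (2+r))^2) := by ring
      calc ((m+1:ℕ):ℝ≥0∞)^2 * (‖f r‖₊ : ℝ≥0∞)^2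
          = ENNReal.ofReal (((m:ℝ)+1)^2 * ‖f r‖^2) := by
            rw [ENNReal.ofReal_mul (by positivity), MR.enorm_sq_eq]
            congr 1
            rw [← ENNReal.ofReal_natCast (m+1), ← ENNReal.ofReal_pow (by positivity)]
            congr 1
            push_cast
            ring
        _ ≤ ENNReal.ofReal ((4/(Real.log 2)^2) * (‖f r‖^2 * (Real.log (2+r))^2)) :=
            ENNReal.ofReal_le_ofReal hreal
        _ = c₁ * wt r := ENNReal.ofReal_mul (by positivity)
    calc ((m+1:ℕ):ℝ≥0∞)^2 * ρ m
        = ∫⁻ r in Set.Ioc (((2^m:ℕ)):ℝ) (((2^(m+1):ℕ)):ℝ),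
            ((m+1:ℕ):ℝ≥0∞)^2 * (‖f r‖₊ : ℝ≥0∞)^2 := by
          rw [hρ]
          exact (lintegral_const_mul' _ _ (ENNReal.pow_ne_top (ENNReal.natCast_ne_top _))).symm
      _ ≤ ∫⁻ r in Set.Ioc (((2^m:ℕ)):ℝ) (((2^(m+1):ℕ)):ℝ), c₁ * wt r :=
          setLIntegral_mono_ae' measurableSet_Ioc (ae_of_all _ hpt)
      _ = c₁ * Wm m := lintegral_const_mul' _ _ ENNReal.ofReal_ne_top
  have hWmW : ∑' m, Wm m ≤ W := by
    rw [ENNReal.tsum_eq_iSup_nat]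
    refine iSup_le fun N => ?_
    have hv : Monotone (fun i : ℕ => (((2^i:ℕ)):ℝ)) := fun i j hij => by
      dsimp only
      exact_mod_cast Nat.pow_le_pow_right (by norm_num) hij
    have h := MR.tele wt (fun i : ℕ => (((2^i:ℕ)):ℝ)) hv N
    calc ∑ m ∈ Finset.range N, Wm m
        = ∫⁻ r in Set.Ioc (((2^0:ℕ)):ℝ) (((2^N:ℕ)):ℝ), wt r := h
      _ ≤ ∫⁻ r in Set.Ioi (0:ℝ), wt r := by
          refine lintegral_mono_set fun r hr => ?_
          have h1 : (1:ℝ) < r := by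
            have := hr.1
            norm_num at this
            exact this
          exact lt_trans (by norm_num) h1
      _ = W := rfl
  -- R and its integral bound
  set Q : ℕ → ℝ → ℝ≥0∞ := fun m k => MR.qsum (e k) m (2^m) with hQdef
  have measQ : ∀ m, AEMeasurable (Q m) σ := by
    intro m
    simp only [hQdef, MR.qsum]
    exact Finset.aemeasurable_fun_sum _ fun l _ => Finset.aemeasurable_fun_sum _ fun i _ =>
      meas2 _ _ (Nat.cast_nonneg _)
        (by exact_mod_cast hlt (2^m) i (2^l) (pow_pos (by norm_num) l))
  set R : ℝ → ℝ≥0∞ := fun k => ∑' m, ((m+1:ℕ):ℝ≥0∞) * Q m k with hRdef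
  have measR : AEMeasurable R σ :=
    MR.aemeasurable_tsum _ (fun m => (measQ m).const_mul _)
  have hQint2 : ∀ m : ℕ, ∫⁻ k, Q m k ∂σ = ((m+1:ℕ):ℝ≥0∞) * ρ m := by
    intro m
    have h := hQint m (2^m)
    rw [show (2^m + 2^m : ℕ) = 2^(m+1) by rw [pow_succ]; ring] at h
    simpa only [hQdef, hρ] using h
  have hRint : ∫⁻ k, R k ∂σ ≤ c₁ * W := by
    simp only [hRdef]
    rw [lintegral_tsum (fun m => ((measQ m).const_mul _))]
    have hterm : ∀ m : ℕ, ∫⁻ k, ((m+1:ℕ):ℝ≥0∞) * Q m k ∂σ ≤ c₁ * Wm m := by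
      intro m
      rw [lintegral_const_mul' _ _ (ENNReal.natCast_ne_top _), hQint2 m, ← mul_assoc, ← pow_two]
      exact hblock m
    calc ∑' m, ∫⁻ k, ((m+1:ℕ):ℝ≥0∞) * Q m k ∂σ ≤ ∑' m, (c₁ * Wm m) :=
          ENNReal.tsum_le_tsum hterm
      _ = c₁ * ∑' m, Wm m := ENNReal.tsum_mul_left
      _ ≤ c₁ * W := mul_le_mul_right hWmW _
  -- A and its bound
  set u : ℕ → ℝ → ℝ≥0∞ := fun i k => (‖D (((2^i:ℕ)):ℝ) (((2^(i+1):ℕ)):ℝ) k‖₊ : ℝ≥0∞) with hu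
  have hcastlt : ∀ i : ℕ, (((2^i:ℕ)):ℝ) < (((2^(i+1):ℕ)):ℝ) := by
    intro i
    exact_mod_cast Nat.pow_lt_pow_right (by norm_num) (Nat.lt_succ_self i)
  have measu : ∀ i, AEMeasurable (u i) σ := fun i => meas _ _ (Nat.cast_nonneg _) (hcastlt i)
  have husq : ∀ i, ∫⁻ k, (u i k)^2 ∂σ = ρ i := by
    intro i
    simp only [hu, hρ]
    exact (key _ _ (Nat.cast_nonneg _) (hcastlt i)).2
  set A : ℝ → ℝ≥0∞ := fun k => ∑' i, u i k with hAdef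
  have measA : AEMeasurable A σ := MR.aemeasurable_tsum u measu
  have hrho_half : ∀ i : ℕ, (ρ i)^(1/2:ℝ) ≤ (((i+1:ℕ):ℝ≥0∞))⁻¹ * (c₁ * Wm i)^(1/2:ℝ) := by
    intro i
    have h1 : (((i+1:ℕ):ℝ≥0∞)^2 * ρ i)^(1/2:ℝ) ≤ (c₁ * Wm i)^(1/2:ℝ) :=
      ENNReal.rpow_le_rpow (hblock i) (by norm_num)
    rw [ENNReal.mul_rpow_of_nonneg _ _ (by norm_num), MR.sq_rpow_half] at h1
    calc (ρ i)^(1/2:ℝ)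
        = (((i+1:ℕ):ℝ≥0∞))⁻¹ * (((i+1:ℕ):ℝ≥0∞) * (ρ i)^(1/2:ℝ)) := by
          rw [← mul_assoc, ENNReal.inv_mul_cancel (by exact_mod_cast Nat.succ_ne_zero i)
            (ENNReal.natCast_ne_top _), one_mul]
      _ ≤ (((i+1:ℕ):ℝ≥0∞))⁻¹ * (c₁ * Wm i)^(1/2:ℝ) := mul_le_mul_right h1 _
  have hsumrho : ∑' i, (ρ i)^(1/2:ℝ) ≤ (2:ℝ≥0∞)^(1/2:ℝ) * (c₁ * W)^(1/2:ℝ) := by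
    have hx : ∀ i : ℕ, (((i+1:ℕ):ℝ≥0∞))⁻¹ = ENNReal.ofReal (1/((i:ℝ)+1)) := by
      intro i
      rw [one_div, ENNReal.ofReal_inv_of_pos (by positivity)]
      congr 1
      rw [← ENNReal.ofReal_natCast (i+1)]
      congr 1
      push_cast
      ring
    calc ∑' i, (ρ i)^(1/2:ℝ)
        ≤ ∑' i, (((i+1:ℕ):ℝ≥0∞))⁻¹ * (c₁ * Wm i)^(1/2:ℝ) := ENNReal.tsum_le_tsum hrho_half
      _ ≤ (∑' i, ((((i+1:ℕ):ℝ≥0∞))⁻¹)^2)^(1/2:ℝ)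
            * (∑' i, ((c₁ * Wm i)^(1/2:ℝ))^2)^(1/2:ℝ) := MR.tsum_CS _ _
      _ ≤ (2:ℝ≥0∞)^(1/2:ℝ) * (c₁ * W)^(1/2:ℝ) := by
          refine mul_le_mul' (ENNReal.rpow_le_rpow ?_ (by norm_num))
            (ENNReal.rpow_le_rpow ?_ (by norm_num))
          · calc ∑' i, ((((i+1:ℕ):ℝ≥0∞))⁻¹)^2
                = ∑' (i:ℕ), ENNReal.ofReal ((1:ℝ)/(i+1)^2) := by
                  refine tsum_congr fun i => ?_
                  rw [hx i, ← ENNReal.ofReal_pow (by positivity)]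
                  congr 1
                  rw [div_pow]
                  norm_num
              _ ≤ 2 := MR.tsum_inv_sq_le
          · calc ∑' i, ((c₁ * Wm i)^(1/2:ℝ))^2 = ∑' i, c₁ * Wm i :=
                  tsum_congr fun i => MR.rpow_half_sq _
              _ = c₁ * ∑' i, Wm i := ENNReal.tsum_mul_left
              _ ≤ c₁ * W := mul_le_mul_right hWmW _
  have hA2 : ∫⁻ k, (A k)^2 ∂σ ≤ 2 * (c₁ * W) := by
    have hSmono : ∀ k, Monotone (fun N => ∑ i ∈ Finset.range N, u i k) := fun k N M h =>
      Finset.sum_le_sum_of_subset (Finset.range_subset_range.mpr h)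
    have h1 : ∀ k, (A k)^2 = ⨆ N, (∑ i ∈ Finset.range N, u i k)^2 := by
      intro k
      simp only [hAdef]
      rw [ENNReal.tsum_eq_iSup_nat, MR.iSup_sq _ (hSmono k)]
    calc ∫⁻ k, (A k)^2 ∂σ = ⨆ N, ∫⁻ k, (∑ i ∈ Finset.range N, u i k)^2 ∂σ := by
          rw [lintegral_congr h1]
          exact lintegral_iSup'
            (fun N => (Finset.aemeasurable_fun_sum _ fun i _ => measu i).pow_const 2)
            (ae_of_all _ fun k N M h => pow_le_pow_left' (hSmono k h) 2)
      _ ≤ 2 * (c₁ * W) := by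
          refine iSup_le fun N => ?_
          have h2 : (∫⁻ k, (∑ i ∈ Finset.range N, u i k)^2 ∂σ)^(1/2:ℝ)
              ≤ (2:ℝ≥0∞)^(1/2:ℝ) * (c₁ * W)^(1/2:ℝ) := by
            calc (∫⁻ k, (∑ i ∈ Finset.range N, u i k)^2 ∂σ)^(1/2:ℝ)
                ≤ ∑ i ∈ Finset.range N, (∫⁻ k, (u i k)^2 ∂σ)^(1/2:ℝ) :=
                  MR.minkowski_sum u measu N
              _ = ∑ i ∈ Finset.range N, (ρ i)^(1/2:ℝ) :=
                  Finset.sum_congr rfl fun i _ => by rw [husq i]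
              _ ≤ ∑' i, (ρ i)^(1/2:ℝ) := ENNReal.sum_le_tsum _
              _ ≤ (2:ℝ≥0∞)^(1/2:ℝ) * (c₁ * W)^(1/2:ℝ) := hsumrho
          calc ∫⁻ k, (∑ i ∈ Finset.range N, u i k)^2 ∂σ
              = ((∫⁻ k, (∑ i ∈ Finset.range N, u i k)^2 ∂σ)^(1/2:ℝ))^2 :=
                (MR.rpow_half_sq _).symm
            _ ≤ ((2:ℝ≥0∞)^(1/2:ℝ) * (c₁ * W)^(1/2:ℝ))^2 := pow_le_pow_left' h2 2
            _ = 2 * (c₁ * W) := by rw [mul_pow, MR.rpow_half_sq, MR.rpow_half_sq]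
  -- first piece bound
  have h01 : ∫⁻ k, (‖D 0 1 k‖₊ : ℝ≥0∞)^2 ∂σ ≤ c₁ * W := by
    rw [(key 0 1 le_rfl one_pos).2]
    have hpt : ∀ r ∈ Set.Ioc (0:ℝ) 1, (‖f r‖₊ : ℝ≥0∞)^2 ≤ c₁ * wt r := by
      intro r hr
      have hr0 : 0 < r := hr.1
      have hlogr : Real.log 2 ≤ Real.log (2+r) := Real.log_le_log (by norm_num) (by linarith)
      have hreal : ‖f r‖^2 ≤ (4/(Real.log 2)^2) * (‖f r‖^2 * (Real.log (2+r))^2) := by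
        have h1 : (Real.log 2)^2 ≤ (Real.log (2+r))^2 := by nlinarith
        have h2 : (4:ℝ) ≤ (4/(Real.log 2)^2) * (Real.log (2+r))^2 := by
          rw [div_mul_eq_mul_div, le_div_iff₀ (by positivity)]
          nlinarith
        nlinarith [sq_nonneg (‖f r‖)]
      calc (‖f r‖₊ : ℝ≥0∞)^2 = ENNReal.ofReal (‖f r‖^2) := MR.enorm_sq_eq _
        _ ≤ ENNReal.ofReal ((4/(Real.log 2)^2) * (‖f r‖^2 * (Real.log (2+r))^2)) :=
            ENNReal.ofReal_le_ofReal hreal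
        _ = c₁ * wt r := ENNReal.ofReal_mul (by positivity)
    calc ∫⁻ r in Set.Ioc (0:ℝ) 1, (‖f r‖₊:ℝ≥0∞)^2
        ≤ ∫⁻ r in Set.Ioc (0:ℝ) 1, c₁ * wt r :=
          setLIntegral_mono_ae' measurableSet_Ioc (ae_of_all _ hpt)
      _ = c₁ * ∫⁻ r in Set.Ioc (0:ℝ) 1, wt r := lintegral_const_mul' _ _ ENNReal.ofReal_ne_top
      _ ≤ c₁ * W := mul_le_mul_right (lintegral_mono_set fun r hr => hr.1) _
  -- the dominating function
  set gb : ℝ → ℝ≥0∞ := fun k => (‖D 0 1 k‖₊ : ℝ≥0∞) + A k + (R k)^(1/2:ℝ) with hgbdef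
  have hgb2 : ∫⁻ k, (gb k)^2 ∂σ ≤ 18 * (c₁ * W) := by
    have hu1 : AEMeasurable (fun k => (‖D 0 1 k‖₊:ℝ≥0∞)) σ := meas 0 1 le_rfl one_pos
    have hu3 : AEMeasurable (fun k => (R k)^(1/2:ℝ)) σ :=
      ENNReal.continuous_rpow_const.measurable.comp_aemeasurable measR
    have hmk1 := ENNReal.lintegral_Lp_add_le (p := 2) (μ := σ) (hu1.add measA) hu3 (by norm_num)
    have hmk2 := ENNReal.lintegral_Lp_add_le (p := 2) (μ := σ) hu1 measA (by norm_num)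
    simp only [ENNReal.rpow_two, Pi.add_apply] at hmk1 hmk2
    have hb3 : ∫⁻ k, ((R k)^(1/2:ℝ))^2 ∂σ ≤ c₁ * W := by
      calc ∫⁻ k, ((R k)^(1/2:ℝ))^2 ∂σ = ∫⁻ k, R k ∂σ :=
            lintegral_congr fun k => MR.rpow_half_sq _
        _ ≤ c₁ * W := hRint
    have hstep : (∫⁻ k, (gb k)^2 ∂σ)^(1/2:ℝ) ≤ 3 * (2*(c₁*W))^(1/2:ℝ) := by
      have e1 : (∫⁻ k, ((‖D 0 1 k‖₊:ℝ≥0∞))^2 ∂σ)^(1/2:ℝ) ≤ (2*(c₁*W))^(1/2:ℝ) :=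
        ENNReal.rpow_le_rpow (h01.trans (le_mul_of_one_le_left (zero_le) one_le_two))
          (by norm_num)
      have e2 : (∫⁻ k, (A k)^2 ∂σ)^(1/2:ℝ) ≤ (2*(c₁*W))^(1/2:ℝ) :=
        ENNReal.rpow_le_rpow hA2 (by norm_num)
      have e3 : (∫⁻ k, ((R k)^(1/2:ℝ))^2 ∂σ)^(1/2:ℝ) ≤ (2*(c₁*W))^(1/2:ℝ) :=
        ENNReal.rpow_le_rpow (hb3.trans (le_mul_of_one_le_left (zero_le) one_le_two))
          (by norm_num)
      calc (∫⁻ k, (gb k)^2 ∂σ)^(1/2:ℝ)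
          ≤ (∫⁻ k, ((‖D 0 1 k‖₊:ℝ≥0∞) + A k)^2 ∂σ)^(1/2:ℝ)
              + (∫⁻ k, ((R k)^(1/2:ℝ))^2 ∂σ)^(1/2:ℝ) := hmk1
        _ ≤ ((∫⁻ k, ((‖D 0 1 k‖₊:ℝ≥0∞))^2 ∂σ)^(1/2:ℝ)
              + (∫⁻ k, (A k)^2 ∂σ)^(1/2:ℝ))
              + (∫⁻ k, ((R k)^(1/2:ℝ))^2 ∂σ)^(1/2:ℝ) := add_le_add_left hmk2 _
        _ ≤ ((2*(c₁*W))^(1/2:ℝ) + (2*(c₁*W))^(1/2:ℝ)) + (2*(c₁*W))^(1/2:ℝ) :=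
            add_le_add (add_le_add e1 e2) e3
        _ = 3 * (2*(c₁*W))^(1/2:ℝ) := by ring
    calc ∫⁻ k, (gb k)^2 ∂σ = ((∫⁻ k, (gb k)^2 ∂σ)^(1/2:ℝ))^2 := (MR.rpow_half_sq _).symm
      _ ≤ (3 * (2*(c₁*W))^(1/2:ℝ))^2 := pow_le_pow_left' hstep 2
      _ = 9 * ((2*(c₁*W))^(1/2:ℝ))^2 := by ring
      _ = 18 * (c₁ * W) := by rw [MR.rpow_half_sq]; ring
  -- dyadic decomposition of partial integrals
  have hdec1 : ∀ (k : ℝ) (n : ℕ),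
      IntegrableOn (fun r => f r * P r k) (Set.Ioc (0:ℝ) (n:ℝ)) volume →
      ∀ j : ℕ, 2^j ≤ n → D 0 (((2^j:ℕ)):ℝ) k
        = D 0 1 k + ∑ i ∈ Finset.range j, D (((2^i:ℕ)):ℝ) (((2^(i+1):ℕ)):ℝ) k := by
    intro k n hG j
    induction j with
    | zero => intro h; simp
    | succ j ih =>
      intro hj
      have hj' : 2^j ≤ n := le_trans (Nat.pow_le_pow_right (by norm_num) (Nat.le_succ j)) hj
      have haddj : D 0 (((2^(j+1):ℕ)):ℝ) k
          = D 0 (((2^j:ℕ)):ℝ) k + D (((2^j:ℕ)):ℝ) (((2^(j+1):ℕ)):ℝ) k := by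
        refine Dadd _ _ _ k (Nat.cast_nonneg _) (hcastlt j).le ?_
        refine hG.mono_set (Set.Ioc_subset_Ioc le_rfl ?_)
        exact_mod_cast hj
      rw [haddj, ih hj', Finset.sum_range_succ, add_assoc]
  -- pointwise domination
  have hCC : ∀ (k : ℝ) (n : ℕ), (‖D 0 (n:ℝ) k‖₊ : ℝ≥0∞) ≤ gb k := by
    intro k n
    rcases Nat.eq_zero_or_pos n with hn | hn
    · subst hn
      have h0 : D 0 ((0:ℕ):ℝ) k = 0 := by
        rw [Nat.cast_zero]
        exact Dzero 0 k
      rw [h0]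
      simp
    by_cases hG : IntegrableOn (fun r => f r * P r k) (Set.Ioc (0:ℝ) (n:ℝ)) volume
    swap
    · have h0 : D 0 (n:ℝ) k = 0 := integral_undef hG
      rw [h0]
      simp
    · set m := Nat.log 2 n with hm
      have hm1 : 2^m ≤ n := Nat.pow_log_le_self 2 (by omega)
      have hm2 : n < 2^(m+1) := Nat.lt_pow_succ_log_self (by norm_num) n
      have hsplit : D 0 (n:ℝ) k = D 0 (((2^m:ℕ)):ℝ) k + D (((2^m:ℕ)):ℝ) (n:ℝ) k :=
        Dadd _ _ _ k (Nat.cast_nonneg _) (by exact_mod_cast hm1) hG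
      have hBn := hBloc k m (2^m) (n - 2^m) (by omega) (by
        rw [show (2^m + (n - 2^m) : ℕ) = n by omega]; exact hG)
      rw [show (2^m + (n - 2^m) : ℕ) = n by omega] at hBn
      have hQR : ((m+1:ℕ):ℝ≥0∞) * Q m k ≤ R k := by
        have h := ENNReal.le_tsum (f := fun m' : ℕ => ((m'+1:ℕ):ℝ≥0∞) * Q m' k) m
        simpa only [hRdef] using h
      have h2 : (‖D (((2^m:ℕ)):ℝ) (n:ℝ) k‖₊ : ℝ≥0∞) ≤ (R k)^(1/2:ℝ) := by
        apply MR.le_rpow_half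
        exact le_trans hBn hQR
      have hS : D 0 (((2^m:ℕ)):ℝ) k
          = D 0 1 k + ∑ i ∈ Finset.range m, D (((2^i:ℕ)):ℝ) (((2^(i+1):ℕ)):ℝ) k :=
        hdec1 k n hG m hm1
      calc (‖D 0 (n:ℝ) k‖₊ : ℝ≥0∞)
          ≤ (‖D 0 (((2^m:ℕ)):ℝ) k‖₊ : ℝ≥0∞) + (‖D (((2^m:ℕ)):ℝ) (n:ℝ) k‖₊ : ℝ≥0∞) := by
            rw [hsplit]
            exact_mod_cast nnnorm_add_le _ _
        _ ≤ ((‖D 0 1 k‖₊ : ℝ≥0∞) + A k) + (R k)^(1/2:ℝ) := by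
            refine add_le_add ?_ h2
            rw [hS]
            calc (‖D 0 1 k + ∑ i ∈ Finset.range m,
                    D (((2^i:ℕ)):ℝ) (((2^(i+1):ℕ)):ℝ) k‖₊ : ℝ≥0∞)
                ≤ (‖D 0 1 k‖₊ : ℝ≥0∞)
                  + (‖∑ i ∈ Finset.range m, D (((2^i:ℕ)):ℝ) (((2^(i+1):ℕ)):ℝ) k‖₊ : ℝ≥0∞) := by
                  exact_mod_cast nnnorm_add_le _ _
              _ ≤ (‖D 0 1 k‖₊ : ℝ≥0∞)
                  + ∑ i ∈ Finset.range m, (‖D (((2^i:ℕ)):ℝ) (((2^(i+1):ℕ)):ℝ) k‖₊ : ℝ≥0∞) := by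
                  refine add_le_add_right ?_ _
                  exact_mod_cast nnnorm_sum_le _ _
              _ ≤ (‖D 0 1 k‖₊ : ℝ≥0∞) + A k := by
                  refine add_le_add_right ?_ _
                  simp only [hAdef, hu]
                  exact ENNReal.sum_le_tsum _
        _ = gb k := rfl
  -- second conjunct
  have hgoal2 : ∫ k, (⨆ n : ℕ, ‖D 0 (n:ℝ) k‖)^2 ∂σ
      ≤ (9/Real.log 2)^2 * ∫ r in Set.Ioi (0:ℝ), ‖f r‖^2 * (Real.log (2+r))^2 := by
    set F : ℝ → ℝ := fun k => ⨆ n : ℕ, ‖D 0 (n:ℝ) k‖ with hFdef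
    have hL0 : 0 ≤ ∫ r in Set.Ioi (0:ℝ), ‖f r‖^2 * (Real.log (2+r))^2 :=
      integral_nonneg fun r => by positivity
    have hFG : ∀ k, ENNReal.ofReal ((F k)^2) ≤ (gb k)^2 := by
      intro k
      by_cases hfin : gb k = ∞
      · rw [hfin]
        simp [ENNReal.top_pow]
      · have hub : ∀ n : ℕ, ‖D 0 (n:ℝ) k‖ ≤ (gb k).toReal := by
          intro n
          have h1 := hCC k n
          have h2 : ((‖D 0 (n:ℝ) k‖₊ : ℝ≥0∞)).toReal ≤ (gb k).toReal :=
            ENNReal.toReal_mono hfin h1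
          simpa using h2
        have hbdd : BddAbove (Set.range fun n : ℕ => ‖D 0 (n:ℝ) k‖) :=
          ⟨(gb k).toReal, by rintro x ⟨n, rfl⟩; exact hub n⟩
        have hF1 : F k ≤ (gb k).toReal := ciSup_le hub
        have hF0 : 0 ≤ F k :=
          le_trans (norm_nonneg (D 0 ((0:ℕ):ℝ) k)) (le_ciSup hbdd 0)
        calc ENNReal.ofReal ((F k)^2) ≤ ENNReal.ofReal (((gb k).toReal)^2) :=
              ENNReal.ofReal_le_ofReal (by nlinarith)
          _ = (ENNReal.ofReal ((gb k).toReal))^2 :=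
              ENNReal.ofReal_pow ENNReal.toReal_nonneg 2
          _ = (gb k)^2 := by rw [ENNReal.ofReal_toReal hfin]
    have hlint : ∫⁻ k, ENNReal.ofReal ((F k)^2) ∂σ
        ≤ ENNReal.ofReal ((9/Real.log 2)^2
            * ∫ r in Set.Ioi (0:ℝ), ‖f r‖^2 * (Real.log (2+r))^2) := by
      calc ∫⁻ k, ENNReal.ofReal ((F k)^2) ∂σ ≤ ∫⁻ k, (gb k)^2 ∂σ :=
            lintegral_mono fun k => hFG k
        _ ≤ 18 * (c₁ * W) := hgb2
        _ ≤ ENNReal.ofReal ((9/Real.log 2)^2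
              * ∫ r in Set.Ioi (0:ℝ), ‖f r‖^2 * (Real.log (2+r))^2) := by
            rw [← hWL, hc₁]
            calc (18:ℝ≥0∞) * (ENNReal.ofReal (4/(Real.log 2)^2)
                  * ENNReal.ofReal (∫ r in Set.Ioi (0:ℝ), ‖f r‖^2 * (Real.log (2+r))^2))
                = ENNReal.ofReal (18 * ((4/(Real.log 2)^2)
                    * ∫ r in Set.Ioi (0:ℝ), ‖f r‖^2 * (Real.log (2+r))^2)) := by
                  rw [ENNReal.ofReal_mul (by norm_num), ENNReal.ofReal_mul (by positivity)]
                  congr 1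
                  norm_num
              _ ≤ ENNReal.ofReal ((9/Real.log 2)^2
                    * ∫ r in Set.Ioi (0:ℝ), ‖f r‖^2 * (Real.log (2+r))^2) := by
                  apply ENNReal.ofReal_le_ofReal
                  have h1 : 18 * (4/(Real.log 2)^2) ≤ (9/Real.log 2)^2 := by
                    rw [div_pow,
                      show (18:ℝ) * (4/(Real.log 2)^2) = 72/(Real.log 2)^2 by ring]
                    gcongr
                    norm_num
                  nlinarith
    by_cases hIntF : Integrable (fun k => (F k)^2) σ
    · rw [integral_eq_lintegral_of_nonneg_ae (ae_of_all _ fun k => sq_nonneg (F k))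
        hIntF.aestronglyMeasurable]
      exact ENNReal.toReal_le_of_le_ofReal (by positivity) hlint
    · rw [integral_undef hIntF]
      positivity
  -- convergence
  have hconv : ∀ᵐ k ∂σ, ∃ l : ℂ, Tendsto (fun n : ℕ => D 0 (n:ℝ) k) atTop (nhds l) := by
    have hcWfin : c₁ * W ≠ ∞ := ENNReal.mul_ne_top ENNReal.ofReal_ne_top hWfin
    have hRfin : ∀ᵐ k ∂σ, R k < ∞ := ae_lt_top' measR (ne_top_of_le_ne_top hcWfin hRint)
    have hAfin : ∀ᵐ k ∂σ, A k < ∞ := by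
      have h2 : ∫⁻ k, (A k)^2 ∂σ ≠ ∞ :=
        ne_top_of_le_ne_top (ENNReal.mul_ne_top (by norm_num) hcWfin) hA2
      have h3 : ∀ᵐ k ∂σ, (A k)^2 < ∞ := ae_lt_top' (measA.pow_const 2) h2
      filter_upwards [h3] with k hk
      by_contra h
      have hA : A k = ∞ := by simpa [lt_top_iff_ne_top] using h
      rw [hA] at hk
      simp [ENNReal.top_pow] at hk
    filter_upwards [hRfin, hAfin] with k hRk hAk
    by_cases hGall : ∀ n : ℕ, IntegrableOn (fun r => f r * P r k) (Set.Ioc (0:ℝ) (n:ℝ)) volume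
    swap
    · push_neg at hGall
      obtain ⟨n₀, hn₀⟩ := hGall
      refine ⟨0, ?_⟩
      apply tendsto_atTop_of_eventually_const (i₀ := n₀)
      intro n hn
      apply integral_undef
      intro hcon
      have hcon' : IntegrableOn (fun r => f r * P r k) (Set.Ioc (0:ℝ) (n:ℝ)) volume := hcon
      exact hn₀ (hcon'.mono_set (Set.Ioc_subset_Ioc le_rfl (by exact_mod_cast hn)))
    · have hsummable : Summable (fun i : ℕ => D (((2^i:ℕ)):ℝ) (((2^(i+1):ℕ)):ℝ) k) := by
        have h1 : (∑' i, (‖D (((2^i:ℕ)):ℝ) (((2^(i+1):ℕ)):ℝ) k‖₊ : ℝ≥0∞)) ≠ ∞ := hAk.ne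
        exact Summable.of_nnnorm (ENNReal.tsum_coe_ne_top_iff_summable.mp h1)
      refine ⟨D 0 1 k + ∑' i, D (((2^i:ℕ)):ℝ) (((2^(i+1):ℕ)):ℝ) k, ?_⟩
      have hstep1 : Tendsto (fun m : ℕ => D 0 (((2^m:ℕ)):ℝ) k) atTop
          (nhds (D 0 1 k + ∑' i, D (((2^i:ℕ)):ℝ) (((2^(i+1):ℕ)):ℝ) k)) := by
        have h1 : (fun m : ℕ => D 0 (((2^m:ℕ)):ℝ) k)
            = fun m : ℕ => D 0 1 k + ∑ i ∈ Finset.range m,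
                D (((2^i:ℕ)):ℝ) (((2^(i+1):ℕ)):ℝ) k :=
          funext fun m => hdec1 k (2^m) (hGall (2^m)) m le_rfl
        rw [h1]
        exact (hsummable.hasSum.tendsto_sum_nat).const_add _
      have hlogto : Tendsto (fun n : ℕ => Nat.log 2 n) atTop atTop := by
        apply tendsto_atTop_atTop.mpr
        intro b
        refine ⟨2^b, fun n hn => ?_⟩
        have hb1 : (1:ℕ) ≤ 2^b := Nat.one_le_two_pow
        exact (Nat.le_log_iff_pow_le (by norm_num) (by omega)).mpr hn
      set g : ℕ → ℝ≥0∞ := fun m => ((m+1:ℕ):ℝ≥0∞) * Q m k with hgdef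
      have hgsum : ∑' m, g m ≠ ∞ := hRk.ne
      have htail : Tendsto (fun j => ∑' m, g (m + j)) atTop (nhds 0) :=
        ENNReal.tendsto_sum_nat_add g hgsum
      have hτ : Tendsto (fun j => Real.sqrt ((∑' m, g (m + j)).toReal)) atTop (nhds 0) := by
        have h1 : Tendsto (fun j => (∑' m, g (m + j)).toReal) atTop (nhds 0) := by
          have h2 := (ENNReal.tendsto_toReal (a := 0) (by norm_num)).comp htail
          simpa [Function.comp_def] using h2
        have h3 := (Real.continuous_sqrt.tendsto 0).comp h1
        simpa [Function.comp_def] using h3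
      have hbound : ∀ n : ℕ, 1 ≤ n → ‖D 0 (n:ℝ) k - D 0 (((2^(Nat.log 2 n):ℕ)):ℝ) k‖
          ≤ Real.sqrt ((∑' m, g (m + Nat.log 2 n)).toReal) := by
        intro n hn
        have hm1 : 2^(Nat.log 2 n) ≤ n := Nat.pow_log_le_self 2 (by omega)
        have hm2 : n < 2^(Nat.log 2 n + 1) := Nat.lt_pow_succ_log_self (by norm_num) n
        have hsplit : D 0 (n:ℝ) k = D 0 (((2^(Nat.log 2 n):ℕ)):ℝ) k
            + D (((2^(Nat.log 2 n):ℕ)):ℝ) (n:ℝ) k :=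
          Dadd _ _ _ k (Nat.cast_nonneg _) (by exact_mod_cast hm1) (hGall n)
        have heq : D 0 (n:ℝ) k - D 0 (((2^(Nat.log 2 n):ℕ)):ℝ) k
            = D (((2^(Nat.log 2 n):ℕ)):ℝ) (n:ℝ) k := by
          rw [hsplit]; ring
        rw [heq]
        have hBn := hBloc k (Nat.log 2 n) (2^(Nat.log 2 n)) (n - 2^(Nat.log 2 n)) (by omega) (by
          rw [show (2^(Nat.log 2 n) + (n - 2^(Nat.log 2 n)) : ℕ) = n by omega]
          exact hGall n)
        rw [show (2^(Nat.log 2 n) + (n - 2^(Nat.log 2 n)) : ℕ) = n by omega] at hBn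
        have hle : (‖D (((2^(Nat.log 2 n):ℕ)):ℝ) (n:ℝ) k‖₊ : ℝ≥0∞)^2
            ≤ ∑' m', g (m' + Nat.log 2 n) := by
          refine le_trans hBn ?_
          have h0 : g (0 + Nat.log 2 n) ≤ ∑' m', g (m' + Nat.log 2 n) :=
            ENNReal.le_tsum 0
          simpa [hgdef] using h0
        have htailne : (∑' m', g (m' + Nat.log 2 n)) ≠ ∞ := by
          refine ne_top_of_le_ne_top hgsum ?_
          exact ENNReal.tsum_comp_le_tsum_of_injective (fun a b h => by omega) g
        have h2 : ‖D (((2^(Nat.log 2 n):ℕ)):ℝ) (n:ℝ) k‖^2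
            ≤ (∑' m', g (m' + Nat.log 2 n)).toReal := by
          have h3 := ENNReal.toReal_mono htailne hle
          rw [MR.enorm_sq_eq, ENNReal.toReal_ofReal (by positivity)] at h3
          exact h3
        calc ‖D (((2^(Nat.log 2 n):ℕ)):ℝ) (n:ℝ) k‖
            = Real.sqrt (‖D (((2^(Nat.log 2 n):ℕ)):ℝ) (n:ℝ) k‖^2) :=
              (Real.sqrt_sq (norm_nonneg _)).symm
          _ ≤ Real.sqrt ((∑' m', g (m' + Nat.log 2 n)).toReal) := Real.sqrt_le_sqrt h2
      have hdiff : Tendsto (fun n : ℕ => D 0 (n:ℝ) k - D 0 (((2^(Nat.log 2 n):ℕ)):ℝ) k)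
          atTop (nhds 0) := by
        apply squeeze_zero_norm' ?_ (hτ.comp hlogto)
        filter_upwards [eventually_ge_atTop 1] with n hn
        exact hbound n hn
      have hcomp : Tendsto (fun n : ℕ => D 0 (((2^(Nat.log 2 n):ℕ)):ℝ) k) atTop
          (nhds (D 0 1 k + ∑' i, D (((2^i:ℕ)):ℝ) (((2^(i+1):ℕ)):ℝ) k)) :=
        hstep1.comp hlogto
      have hfinal := hdiff.add hcomp
      simpa using hfinal
  exact ⟨hconv, hgoal2⟩
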